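/- Let η be a distribution on a finite set V of size r, let ρ ∈ (0,1), and let n ∈ ℕ. For each i ∈ {1,…,n} let t_i, w_i ∈ [0,1]^V, let Λ be the distribution on [0,1]^V of t_I for I uniformly random in {1,…,n}, and let Λ̂ be the distribution of w_I for I uniformly random in {1,…,n}. If for at least (1−ρ)·n of the indices i ∈ {1,…,n} it holds that |t_i(v) − w_i(v)| ≤ ρ for every v ∈ V with η(v) ≥ ρ/r, then d_EM^η(Λ, Λ̂) ≤ 3ρ. -/
import Mathlib


open scoped BigOperators

namespace HugeObject

noncomputable section

/-- A finitely supported probability distribution on `Ω`, given by its mass function. -/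
def IsDist {Ω : Type*} (μ : Ω → ℝ) : Prop :=
  (∀ x, 0 ≤ μ x) ∧ (Function.support μ).Finite ∧ ∑ᶠ x, μ x = 1

/-- Total variation distance between two mass functions. -/
def dTV {Ω : Type*} (μ τ : Ω → ℝ) : ℝ :=
  (1 / 2) * ∑ᶠ x, |μ x - τ x|

/-- `T` is a transfer distribution (coupling) between `μ` and `τ`. -/
def IsCoupling {A B : Type*} (T : A × B → ℝ) (μ : A → ℝ) (τ : B → ℝ) : Prop :=
  IsDist T ∧ (∀ a, ∑ᶠ b, T (a, b) = μ a) ∧ (∀ b, ∑ᶠ a, T (a, b) = τ b)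

/-- Earth Mover distance with respect to a distance function `d`: the infimum, over
all transfer distributions between `μ` and `τ`, of the expected distance. -/
def dEM {Ω : Type*} (d : Ω → Ω → ℝ) (μ τ : Ω → ℝ) : ℝ :=
  sInf {c | ∃ T : Ω × Ω → ℝ, IsCoupling T μ τ ∧ c = ∑ᶠ p : Ω × Ω, T p * d p.1 p.2}

/-- η-weighted ℓ1 distance between vectors. -/
def wl1 {A : Type*} (η : A → ℝ) (x y : A → ℝ) : ℝ := ∑ᶠ a, η a * |x a - y a|

/-- A distribution on vectors is supported on `[0,1]^A`. -/
def SuppIn01 {A : Type*} (Λ : (A → ℝ) → ℝ) : Prop :=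
  ∀ t, Λ t ≠ 0 → ∀ a, t a ∈ Set.Icc (0 : ℝ) 1

/-- Empirical distribution of the tuple `t` (distribution of `t I` for uniform `I`). -/
def empDist {n : ℕ} {α : Type*} (t : Fin n → α) : α → ℝ :=
  fun u => (Nat.card {i : Fin n // t i = u} : ℝ) / n

/-- Normalized Hamming distance on `{0,1}^n`. -/
def normHamming (n : ℕ) (x y : Fin n → Bool) : ℝ :=
  (Nat.card {i : Fin n // x i ≠ y i} : ℝ) / n

section Detailing

variable {n : ℕ} {A : Type*} [Fintype A]

/-- Weight distribution (second marginal) of a detailing. -/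
def weight (ξ : (Fin n → Bool) × A → ℝ) (a : A) : ℝ := ∑ x : Fin n → Bool, ξ (x, a)

/-- `ξ` is a detailing of `μ` with respect to `A`: a distribution on
`{0,1}^n × A` whose first marginal is `μ`. -/
def IsDetailing (ξ : (Fin n → Bool) × A → ℝ) (μ : (Fin n → Bool) → ℝ) : Prop :=
  IsDist ξ ∧ ∀ x, ∑ a : A, ξ (x, a) = μ x

/-- Component distribution `μ_a` of a detailing. -/
def component (ξ : (Fin n → Bool) × A → ℝ) (a : A) : (Fin n → Bool) → ℝ :=
  fun x => ξ (x, a) / weight ξ a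

/-- The type of index `i`: `t_i a = Pr_{x ~ μ_a} [x i = 1]` (0 when the weight vanishes). -/
def typeOf (ξ : (Fin n → Bool) × A → ℝ) (i : Fin n) : A → ℝ :=
  fun a => (∑ x : Fin n → Bool, if x i then ξ (x, a) else 0) / weight ξ a

/-- The type distribution of a detailing: distribution of `typeOf ξ I` for uniform `I`. -/
def typeDist (ξ : (Fin n → Bool) × A → ℝ) : (A → ℝ) → ℝ :=
  empDist (fun i : Fin n => typeOf ξ i)

/-- The index of a detailing. -/
def ind (ξ : (Fin n → Bool) × A → ℝ) : ℝ :=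
  (∑ i : Fin n, ∑ a : A, weight ξ a * typeOf ξ i a ^ 2) / n

end Detailing

section Goodness

variable {n q : ℕ}

/-- Marginal of coordinate `j`. -/
def margAt (ν : (Fin n → Bool) → ℝ) (j : Fin n) : Bool → ℝ :=
  fun b => ∑ x : Fin n → Bool, if x j = b then ν x else 0

/-- Joint distribution of the coordinates listed in `J`. -/
def jointAt (ν : (Fin n → Bool) → ℝ) (J : Fin q → Fin n) : (Fin q → Bool) → ℝ :=
  fun y => ∑ x : Fin n → Bool, if ∀ ℓ, x (J ℓ) = y ℓ then ν x else 0

/-- The tuple `J` is ε-independent with respect to `ν`. -/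
def EpsIndep (ε : ℝ) (ν : (Fin n → Bool) → ℝ) (J : Fin q → Fin n) : Prop :=
  dTV (jointAt ν J) (fun y => ∏ ℓ, margAt ν (J ℓ) (y ℓ)) ≤ ε

/-- A distribution on `{0,1}^n` is (ε,q)-good. -/
def IsGoodDist (ε : ℝ) (q : ℕ) (ν : (Fin n → Bool) → ℝ) : Prop :=
  (1 - ε) * (n : ℝ) ^ q ≤ (Nat.card {J : Fin q → Fin n // EpsIndep ε ν J} : ℝ)

/-- A detailing is (ε,q)-good. -/
def IsGoodDetailing {A : Type*} [Fintype A] (ε : ℝ) (q : ℕ)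
    (ξ : (Fin n → Bool) × A → ℝ) : Prop :=
  ∃ J : Finset A, 1 - ε ≤ ∑ a ∈ J, weight ξ a ∧ ∀ a ∈ J, IsGoodDist ε q (component ξ a)

end Goodness

/-- The simulated distribution `D_sim(η, Λ)` on `{0,1}^{s×q}`. -/
def Dsim {A : Type*} [Fintype A] (s q : ℕ) (η : A → ℝ) (Λ : (A → ℝ) → ℝ) :
    (Fin s → Fin q → Bool) → ℝ :=
  fun M => ∑ᶠ T : Fin q → (A → ℝ),
    (∏ j, Λ (T j)) * ∑ a : Fin s → A, (∏ i, η (a i)) *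
      ∏ i : Fin s, ∏ j : Fin q, if M i j then T j (a i) else 1 - T j (a i)

/-- The canonical (s,q) test distribution `D_test` for `μ`. -/
def Dtest (s q n : ℕ) (μ : (Fin n → Bool) → ℝ) : (Fin s → Fin q → Bool) → ℝ :=
  fun M => (∑ J : Fin q → Fin n, ∑ x : Fin s → Fin n → Bool,
    (∏ i, μ (x i)) * (if ∀ i ℓ, x i (J ℓ) = M i ℓ then (1 : ℝ) else 0)) / (n : ℝ) ^ q

/-- Flat refinement of the detailing `ξ` with respect to `η` on `A × B`. -/
def flatRef {n : ℕ} {A B : Type*} [Fintype A] (ξ : (Fin n → Bool) × A → ℝ)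
    (η : A × B → ℝ) : (Fin n → Bool) × (A × B) → ℝ :=
  fun p => η p.2 * component ξ p.2.1 p.1

/-- One-step transition probability of the Change-types construction:
probability of outputting `yi` at a coordinate with source value `xi`,
source type value `h1` and target type value `h2`. -/
def flipStep (h1 h2 : ℝ) (xi yi : Bool) : ℝ :=
  if xi then (if yi then 1 - max 0 ((h1 - h2) / h1) else max 0 ((h1 - h2) / h1))
  else (if yi then max 0 ((h2 - h1) / (1 - h1)) else 1 - max 0 ((h2 - h1) / (1 - h1)))

/-- The output distribution `Ξ` of the Change-types construction. -/
def changeTypes {n : ℕ} {A B : Type*} [Fintype A] (ξ : (Fin n → Bool) × A → ℝ)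
    (η : A × B → ℝ) (H : Fin n → (A × B → ℝ) × (A × B → ℝ)) :
    (Fin n → Bool) × (Fin n → Bool) × (A × B) → ℝ :=
  fun p => η p.2.2 * component ξ p.2.2.1 p.1 *
    ∏ i, flipStep ((H i).1 p.2.2) ((H i).2 p.2.2) (p.1 i) (p.2.1 i)

/-- Pushforward of a mass function along `f`. -/
def push {α β : Type*} (f : α → β) (μ : α → ℝ) : β → ℝ :=
  fun b => ∑ᶠ a ∈ {a | f a = b}, μ a

/-- Rounding to the nearest integer multiple of `ρ`. -/
def roundMul (ρ x : ℝ) : ℝ := ρ * round (x / ρ)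

/-- Adjustment of `η` to `ν`. -/
def adjust {A B : Type*} [Fintype B] (ν : A → ℝ) (η : A × B → ℝ) : A × B → ℝ :=
  fun p => ν p.1 * (η p / ∑ b : B, η (p.1, b))

end
end HugeObject

open HugeObject


private lemma empDist_eq_filter {n : ℕ} {α : Type*} [DecidableEq α] (f : Fin n → α) (u : α) :
    empDist f u = ((Finset.univ.filter fun i => f i = u).card : ℝ) / n := by
  rw [empDist, Nat.card_eq_fintype_card, Fintype.card_subtype]

/-- if for at least (1−ρ)·n of the indices i the vector w_i
approximates t_i to within ρ on every v of η-weight at least ρ/r, then the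
empirical distributions of the t_i's and of the w_i's are 3ρ-close in the
η-weighted Earth Mover distance. -/
theorem emd_of_good_sample {V : Type*} [Fintype V] (r n : ℕ) (hr : Fintype.card V = r)
    (hn : 0 < n) (η : V → ℝ) (hη : IsDist η) (ρ : ℝ) (hρ : ρ ∈ Set.Ioo (0 : ℝ) 1)
    (t w : Fin n → V → ℝ)
    (ht : ∀ i v, t i v ∈ Set.Icc (0 : ℝ) 1) (hw : ∀ i v, w i v ∈ Set.Icc (0 : ℝ) 1)
    (h : (1 - ρ) * n ≤
      (Nat.card {i : Fin n // ∀ v, ρ / r ≤ η v → |t i v - w i v| ≤ ρ} : ℝ)) :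
    dEM (wl1 η) (empDist t) (empDist w) ≤ 3 * ρ := by
  classical
  obtain ⟨hρ0, hρ1⟩ := hρ
  have hn' : (0:ℝ) < n := by exact_mod_cast hn
  have hη0 : ∀ v, 0 ≤ η v := hη.1
  have hηsum : ∑ v, η v = 1 := by
    have := hη.2.2; rwa [finsum_eq_sum_of_fintype] at this
  have hwl1 : ∀ x y : V → ℝ, wl1 η x y = ∑ v, η v * |x v - y v| := by
    intro x y; rw [wl1, finsum_eq_sum_of_fintype]
  have habs1 : ∀ (i : Fin n) (v : V), |t i v - w i v| ≤ 1 := by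
    intro i v
    obtain ⟨h1, h2⟩ := ht i v; obtain ⟨h3, h4⟩ := hw i v
    rw [abs_sub_le_iff]; constructor <;> linarith
  have hwl1_le_one : ∀ i : Fin n, wl1 η (t i) (w i) ≤ 1 := by
    intro i
    rw [hwl1, ← hηsum]
    apply Finset.sum_le_sum
    intro v _
    calc η v * |t i v - w i v| ≤ η v * 1 := by
          exact mul_le_mul_of_nonneg_left (habs1 i v) (hη0 v)
      _ = η v := mul_one _
  have hwl1_nonneg : ∀ x y : V → ℝ, 0 ≤ wl1 η x y := by
    intro x y; rw [hwl1]
    exact Finset.sum_nonneg fun v _ => mul_nonneg (hη0 v) (abs_nonneg _)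
  -- good indices
  set G : Finset (Fin n) :=
    Finset.univ.filter (fun i => ∀ v, ρ / r ≤ η v → |t i v - w i v| ≤ ρ) with hG
  have hGcard : (1 - ρ) * n ≤ (G.card : ℝ) := by
    have : Nat.card {i : Fin n // ∀ v, ρ / r ≤ η v → |t i v - w i v| ≤ ρ} = G.card := by
      rw [Nat.card_eq_fintype_card, Fintype.card_subtype]
    rwa [this] at h
  -- bound on good indices
  have hgood : ∀ i ∈ G, wl1 η (t i) (w i) ≤ 2 * ρ := by
    intro i hi
    rw [hG, Finset.mem_filter] at hi
    have hi' := hi.2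
    rw [hwl1]
    have hsplit := (Finset.sum_filter_add_sum_filter_not Finset.univ
      (fun v => ρ / r ≤ η v) (fun v => η v * |t i v - w i v|)).symm
    rw [hsplit]
    have h1 : ∑ v ∈ Finset.univ.filter (fun v => ρ / r ≤ η v),
        η v * |t i v - w i v| ≤ ρ := by
      calc ∑ v ∈ Finset.univ.filter (fun v => ρ / r ≤ η v), η v * |t i v - w i v|
          ≤ ∑ v ∈ Finset.univ.filter (fun v => ρ / r ≤ η v), η v * ρ := by
            apply Finset.sum_le_sum
            intro v hv
            rw [Finset.mem_filter] at hv
            exact mul_le_mul_of_nonneg_left (hi' v hv.2) (hη0 v)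
        _ = (∑ v ∈ Finset.univ.filter (fun v => ρ / r ≤ η v), η v) * ρ := by
            rw [Finset.sum_mul]
        _ ≤ 1 * ρ := by
            apply mul_le_mul_of_nonneg_right _ hρ0.le
            rw [← hηsum]
            exact Finset.sum_le_sum_of_subset_of_nonneg (Finset.filter_subset _ _)
              (fun v _ _ => hη0 v)
        _ = ρ := one_mul _
    have h2 : ∑ v ∈ Finset.univ.filter (fun v => ¬ ρ / r ≤ η v),
        η v * |t i v - w i v| ≤ ρ := by
      calc ∑ v ∈ Finset.univ.filter (fun v => ¬ ρ / r ≤ η v), η v * |t i v - w i v|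
          ≤ ∑ v ∈ Finset.univ.filter (fun v => ¬ ρ / r ≤ η v), (ρ / r) := by
            apply Finset.sum_le_sum
            intro v hv
            rw [Finset.mem_filter, not_le] at hv
            calc η v * |t i v - w i v| ≤ η v * 1 :=
                  mul_le_mul_of_nonneg_left (habs1 i v) (hη0 v)
              _ = η v := mul_one _
              _ ≤ ρ / r := hv.2.le
        _ = (Finset.univ.filter (fun v => ¬ ρ / r ≤ η v)).card * (ρ / r) := by
            rw [Finset.sum_const, nsmul_eq_mul]
        _ ≤ r * (ρ / r) := by
            apply mul_le_mul_of_nonneg_right _ (by positivity)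
            have : (Finset.univ.filter (fun v => ¬ ρ / r ≤ η v)).card ≤ Fintype.card V :=
              le_trans (Finset.card_filter_le _ _) (le_of_eq (Finset.card_univ))
            exact_mod_cast this.trans_eq hr
        _ ≤ ρ := by
            rcases Nat.eq_zero_or_pos r with hr0 | hr0
            · simp [hr0]; positivity
            · have : (r : ℝ) ≠ 0 := by positivity
              rw [mul_div_assoc']; rw [mul_comm]; rw [mul_div_assoc, div_self this, mul_one]
    linarith
  -- total sum bound
  have hsum : ∑ i, wl1 η (t i) (w i) ≤ 3 * ρ * n := by
    have hsplit := (Finset.sum_filter_add_sum_filter_not Finset.univ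
      (fun i => ∀ v, ρ / r ≤ η v → |t i v - w i v| ≤ ρ)
      (fun i => wl1 η (t i) (w i))).symm
    rw [hsplit]
    have hb1 : ∑ i ∈ G, wl1 η (t i) (w i) ≤ (n : ℝ) * (2 * ρ) := by
      calc ∑ i ∈ G, wl1 η (t i) (w i) ≤ ∑ i ∈ G, 2 * ρ := Finset.sum_le_sum hgood
        _ = G.card * (2 * ρ) := by rw [Finset.sum_const, nsmul_eq_mul]
        _ ≤ n * (2 * ρ) := by
            apply mul_le_mul_of_nonneg_right _ (by positivity)
            exact_mod_cast (Finset.card_filter_le _ _).trans_eq (Finset.card_univ.trans (Fintype.card_fin n))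
    have hb2 : ∑ i ∈ Finset.univ.filter
        (fun i => ¬ ∀ v, ρ / r ≤ η v → |t i v - w i v| ≤ ρ), wl1 η (t i) (w i)
        ≤ ρ * n := by
      set B := Finset.univ.filter
        (fun i => ¬ ∀ v, ρ / r ≤ η v → |t i v - w i v| ≤ ρ) with hB
      have hcards : (G.card : ℝ) + B.card = n := by
        have := Finset.card_filter_add_card_filter_not
          (s := (Finset.univ : Finset (Fin n)))
          (p := fun i => ∀ v, ρ / r ≤ η v → |t i v - w i v| ≤ ρ)
        rw [Finset.card_univ, Fintype.card_fin] at this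
        exact_mod_cast this
      have hBcard : (B.card : ℝ) ≤ ρ * n := by nlinarith
      calc ∑ i ∈ B, wl1 η (t i) (w i) ≤ ∑ i ∈ B, 1 :=
            Finset.sum_le_sum (fun i _ => hwl1_le_one i)
        _ = B.card := by rw [Finset.sum_const, nsmul_eq_mul, mul_one]
        _ ≤ ρ * n := hBcard
    rw [show (3:ℝ) * ρ * n = n * (2 * ρ) + ρ * n by ring]
    exact add_le_add hb1 hb2
  -- the coupling
  set F : Fin n → (V → ℝ) × (V → ℝ) := fun i => (t i, w i) with hF
  set S : Finset ((V → ℝ) × (V → ℝ)) := Finset.image F Finset.univ with hS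
  set T : ((V → ℝ) × (V → ℝ)) → ℝ := empDist F with hT
  have hTnn : ∀ p, 0 ≤ T p := by
    intro p; rw [hT, empDist_eq_filter]; positivity
  have hT0 : ∀ p, p ∉ S → T p = 0 := by
    intro p hp
    rw [hT, empDist_eq_filter]
    have he : (Finset.univ.filter fun i => F i = p) = ∅ := by
      rw [Finset.filter_eq_empty_iff]
      intro i _ hfi
      exact hp (by rw [hS]; exact Finset.mem_image.2 ⟨i, Finset.mem_univ i, hfi⟩)
    rw [he]; simp
  have hTsupp : Function.support T ⊆ ↑S := by
    intro p hp
    by_contra hps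
    exact hp (hT0 p hps)
  -- fiber identities
  have hfib1 : ∀ (a : V → ℝ) (b : V → ℝ),
      (Finset.univ.filter fun i => F i = (a, b))
        = (Finset.univ.filter fun i => t i = a).filter (fun i => w i = b) := by
    intro a b
    ext i
    simp [hF, Prod.ext_iff, and_assoc]
  -- first marginal
  have hmarg1 : ∀ a, ∑ᶠ b, T (a, b) = empDist t a := by
    intro a
    rw [finsum_eq_sum_of_support_subset (s := Finset.image w Finset.univ) _ ?_]
    · rw [empDist_eq_filter]
      have hc := Finset.card_eq_sum_card_fiberwise
        (f := w) (s := Finset.univ.filter fun i => t i = a)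
        (t := Finset.image w Finset.univ)
        (fun i _ => Finset.mem_image_of_mem w (Finset.mem_univ i))
      rw [hc]
      push_cast
      rw [Finset.sum_div]
      apply Finset.sum_congr rfl
      intro b _
      rw [hT, empDist_eq_filter, hfib1]
    · intro b hb
      rw [Function.mem_support] at hb
      by_contra hbs
      apply hb
      rw [hT, empDist_eq_filter, hfib1]
      have : (Finset.univ.filter fun i => t i = a).filter (fun i => w i = b) = ∅ := by
        rw [Finset.filter_eq_empty_iff]
        intro i _ hwi
        exact hbs (by rw [← hwi]; exact Finset.mem_image_of_mem w (Finset.mem_univ i))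
      rw [this]; simp
  -- second marginal
  have hfib2 : ∀ (a : V → ℝ) (b : V → ℝ),
      (Finset.univ.filter fun i => F i = (a, b))
        = (Finset.univ.filter fun i => w i = b).filter (fun i => t i = a) := by
    intro a b
    ext i
    simp only [hF, Finset.mem_filter, Prod.ext_iff, Finset.mem_univ, true_and]
    tauto
  have hmarg2 : ∀ b, ∑ᶠ a, T (a, b) = empDist w b := by
    intro b
    rw [finsum_eq_sum_of_support_subset (s := Finset.image t Finset.univ) _ ?_]
    · rw [empDist_eq_filter]
      have hc := Finset.card_eq_sum_card_fiberwise
        (f := t) (s := Finset.univ.filter fun i => w i = b)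
        (t := Finset.image t Finset.univ)
        (fun i _ => Finset.mem_image_of_mem t (Finset.mem_univ i))
      rw [hc]
      push_cast
      rw [Finset.sum_div]
      apply Finset.sum_congr rfl
      intro a _
      rw [hT, empDist_eq_filter, hfib2]
    · intro a ha
      rw [Function.mem_support] at ha
      by_contra has
      apply ha
      rw [hT, empDist_eq_filter, hfib2]
      have : (Finset.univ.filter fun i => w i = b).filter (fun i => t i = a) = ∅ := by
        rw [Finset.filter_eq_empty_iff]
        intro i _ hti
        exact has (by rw [← hti]; exact Finset.mem_image_of_mem t (Finset.mem_univ i))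
      rw [this]; simp
  -- T is a distribution
  have hTdist : IsDist T := by
    refine ⟨hTnn, Set.Finite.subset S.finite_toSet hTsupp, ?_⟩
    rw [finsum_eq_sum_of_support_subset _ hTsupp]
    have hc := Finset.card_eq_sum_card_fiberwise
      (f := F) (s := (Finset.univ : Finset (Fin n))) (t := S)
      (fun i _ => by rw [hS]; exact Finset.mem_image_of_mem F (Finset.mem_univ i))
    have : ∑ p ∈ S, T p = ((Finset.univ : Finset (Fin n)).card : ℝ) / n := by
      rw [hc]
      push_cast
      rw [Finset.sum_div]
      apply Finset.sum_congr rfl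
      intro p _
      rw [hT, empDist_eq_filter]
    rw [this, Finset.card_univ, Fintype.card_fin, div_self hn'.ne']
  -- cost
  have hcost : ∑ᶠ p : (V → ℝ) × (V → ℝ), T p * wl1 η p.1 p.2
      = (∑ i, wl1 η (t i) (w i)) / n := by
    have hsupp2 : Function.support (fun p : (V → ℝ) × (V → ℝ) => T p * wl1 η p.1 p.2) ⊆ ↑S := by
      intro p hp
      rw [Function.mem_support] at hp
      by_contra hps
      exact hp (by rw [hT0 p hps, zero_mul])
    rw [finsum_eq_sum_of_support_subset _ hsupp2]
    have hsum2 := Finset.sum_fiberwise_of_maps_to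
      (g := F) (s := (Finset.univ : Finset (Fin n))) (t := S)
      (fun i _ => by rw [hS]; exact Finset.mem_image_of_mem F (Finset.mem_univ i))
      (f := fun i => wl1 η (t i) (w i))
    rw [← hsum2, Finset.sum_div]
    apply Finset.sum_congr rfl
    intro p _
    have : ∑ i ∈ Finset.univ.filter (fun i => F i = p), wl1 η (t i) (w i)
        = ((Finset.univ.filter fun i => F i = p).card : ℝ) * wl1 η p.1 p.2 := by
      rw [Finset.sum_congr rfl (fun i hi => ?_), Finset.sum_const, nsmul_eq_mul]
      rw [Finset.mem_filter] at hi
      rw [← hi.2]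
    rw [this, hT, empDist_eq_filter]
    ring
  -- conclude
  have hmem : (∑ i, wl1 η (t i) (w i)) / n ∈
      {c | ∃ T' : ((V → ℝ) × (V → ℝ)) → ℝ, IsCoupling T' (empDist t) (empDist w)
        ∧ c = ∑ᶠ p : (V → ℝ) × (V → ℝ), T' p * wl1 η p.1 p.2} := by
    exact ⟨T, ⟨hTdist, hmarg1, hmarg2⟩, hcost.symm⟩
  have hbdd : BddBelow {c | ∃ T' : ((V → ℝ) × (V → ℝ)) → ℝ,
      IsCoupling T' (empDist t) (empDist w)
        ∧ c = ∑ᶠ p : (V → ℝ) × (V → ℝ), T' p * wl1 η p.1 p.2} := by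
    refine ⟨0, ?_⟩
    rintro c ⟨T', hT', rfl⟩
    apply finsum_nonneg
    intro p
    exact mul_nonneg (hT'.1.1 p) (hwl1_nonneg _ _)
  calc dEM (wl1 η) (empDist t) (empDist w) ≤ (∑ i, wl1 η (t i) (w i)) / n :=
        csInf_le hbdd hmem
    _ ≤ 3 * ρ := by
        rw [div_le_iff₀ hn']
        exact hsum
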